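/- Fix n ≥ 2 and ζ ∈ ℂ with (n−1)/(n+1) < |ζ| < 1, and let R_ζ(z) := z·((\bar{ζ}z − 1)/(z − ζ))ⁿ, with p(z) = z(\bar{ζ}z−1)ⁿ and q(z) = (z−ζ)ⁿ. Then the two roots a₊(ζ), a₋(ζ) of the quadratic factor \bar{ζ}(n+1)z² − ((n+1)|ζ|² + (1−n))z + ... arising in p'q − pq' besides ζ and 1/\bar{ζ}, namely a_±(ζ) = ((n+1)|ζ|² + (1−n) ± √((n−1)² − (2n²+2)|ζ|² + (n+1)²|ζ|⁴))/(2\bar{ζ}), satisfy |a₊(ζ)| = |a₋(ζ)| = 1. -/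

import Mathlib

/-- `a₊(ζ)` when the discriminant is negative (imaginary square root). -/
noncomputable def aPlusIm (n : ℕ) (ζ : ℂ) : ℂ :=
  (((((n : ℝ) + 1) * (‖ζ‖)^2 + (1 - (n : ℝ)) : ℝ) : ℂ) +
      Complex.I * ((Real.sqrt (-(((n : ℝ) - 1)^2 - (2 * (n : ℝ)^2 + 2) * (‖ζ‖)^2
        + ((n : ℝ) + 1)^2 * (‖ζ‖)^4)) : ℝ) : ℂ)) /
    (2 * (starRingEnd ℂ) ζ)

/-- `a₋(ζ)` when the discriminant is negative (imaginary square root). -/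
noncomputable def aMinusIm (n : ℕ) (ζ : ℂ) : ℂ :=
  (((((n : ℝ) + 1) * (‖ζ‖)^2 + (1 - (n : ℝ)) : ℝ) : ℂ) -
      Complex.I * ((Real.sqrt (-(((n : ℝ) - 1)^2 - (2 * (n : ℝ)^2 + 2) * (‖ζ‖)^2
        + ((n : ℝ) + 1)^2 * (‖ζ‖)^4)) : ℝ) : ℂ)) /
    (2 * (starRingEnd ℂ) ζ)

/-- for `(n−1)/(n+1) < |ζ| < 1` the ramification points `a_±(ζ)` lie on
the unit circle. -/
theorem stmt_9 (n : ℕ) (hn : 2 ≤ n) (ζ : ℂ)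
    (h1 : ((n : ℝ) - 1) / ((n : ℝ) + 1) < ‖ζ‖) (h2 : ‖ζ‖ < 1) :
    ‖aPlusIm n ζ‖ = 1 ∧ ‖aMinusIm n ζ‖ = 1 := by
  have hn' : (2:ℝ) ≤ (n:ℝ) := by exact_mod_cast hn
  set r := ‖ζ‖ with hr
  have hr0 : 0 < r := lt_of_le_of_lt (div_nonneg (by linarith) (by linarith)) h1
  have h1' : (n:ℝ) - 1 < r * ((n:ℝ) + 1) := by
    rw [div_lt_iff₀ (by linarith)] at h1; linarith
  set D : ℝ := ((n : ℝ) - 1)^2 - (2 * (n : ℝ)^2 + 2) * r^2 + ((n : ℝ) + 1)^2 * r^4 with hD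
  have hDneg : -D = (1 - r^2) * (((n:ℝ)+1)^2 * r^2 - ((n:ℝ)-1)^2) := by rw [hD]; ring
  have hDnn : 0 ≤ -D := by
    rw [hDneg]
    apply mul_nonneg
    · nlinarith
    · nlinarith
  set B : ℝ := Real.sqrt (-D) with hB
  have hB2 : B^2 = -D := Real.sq_sqrt hDnn
  set A : ℝ := ((n : ℝ) + 1) * r^2 + (1 - (n : ℝ)) with hA
  have hkey : A^2 + B^2 = (2*r)^2 := by rw [hB2, hA, hD]; ring
  have hden : ‖2 * (starRingEnd ℂ) ζ‖ = 2 * r := by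
    rw [norm_mul, Complex.norm_conj, Complex.norm_two, hr]
  have hnum1 : ‖(A:ℂ) + Complex.I * (B:ℂ)‖ = 2 * r := by
    rw [mul_comm Complex.I, Complex.norm_add_mul_I, hkey, Real.sqrt_sq (by linarith)]
  have hnum2 : ‖(A:ℂ) - Complex.I * (B:ℂ)‖ = 2 * r := by
    have h : (A:ℂ) - Complex.I * (B:ℂ) = (A:ℂ) + ((-B : ℝ):ℂ) * Complex.I := by
      push_cast; ring
    rw [h, Complex.norm_add_mul_I, show A^2 + (-B)^2 = (2*r)^2 by rw [← hkey]; ring,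
      Real.sqrt_sq (by linarith)]
  constructor
  · rw [aPlusIm, ← hr, ← hD, ← hB, ← hA, norm_div, hden, hnum1]
    exact div_self (by positivity)
  · rw [aMinusIm, ← hr, ← hD, ← hB, ← hA, norm_div, hden, hnum2]
    exact div_self (by positivity)
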